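/- Let m ≥ 2 be an integer. Let (p_k) be a sequence of primes satisfying (1+δ)p_k ≤ p_{k+1} ≤ C p_k for all k, for some δ > 0 and C < ∞, and let (a_k) be positive integers with a_k ≤ C p_k^m and a_{k+1} > a_k + p_k^m. Let S_k = { a_k + Σ_{r=1}^m p_k^{r−1}·[j^r]_{p_k} : 0 ≤ j < p_k }, let S = ∪_k S_k, and let (n_ν : ν ∈ ℕ) enumerate S in increasing order. Then n_ν ≍ ν^m: there exist constants 0 < c ≤ C' < ∞ such that c·ν^m ≤ n_ν ≤ C'·ν^m for all ν ∈ ℕ. -/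

import Mathlib

private lemma geom_aux (p : ℕ) (hp : 1 ≤ p) (m : ℕ) :
    (∑ r ∈ Finset.range m, p ^ r * (p - 1)) + 1 = p ^ m := by
  induction m with
  | zero => simp
  | succ m ih =>
    rw [Finset.sum_range_succ, pow_succ]
    have h2 : p ^ m * (p - 1) + p ^ m = p ^ m * p := by
      obtain ⟨q, rfl⟩ := Nat.exists_eq_add_of_le hp
      rw [Nat.add_sub_cancel_left]
      ring
    omega

private lemma mod_aux (p m j : ℕ) (hm : 1 ≤ m) (hj : j < p) :
    (∑ r ∈ Finset.range m, p ^ r * (j ^ (r+1) % p)) % p = j := by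
  obtain ⟨m', rfl⟩ := Nat.exists_eq_add_of_le hm
  rw [Nat.add_comm 1 m', Finset.sum_range_succ']
  have h : ∀ i ∈ Finset.range m', p ^ (i+1) * (j ^ (i+1+1) % p) = p * (p ^ i * (j ^ (i+2) % p)) := by
    intro i _; ring
  rw [Finset.sum_congr rfl h, ← Finset.mul_sum, Nat.mul_add_mod]
  simp [Nat.mod_eq_of_lt hj]

private lemma geom_real (δ : ℝ) (hδ : 0 < δ) (p : ℕ → ℕ)
    (hlac : ∀ k, (1 + δ) * (p k : ℝ) ≤ (p (k + 1) : ℝ)) (k : ℕ) :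
    ∑ i ∈ Finset.range (k+1), (p i : ℝ) ≤ (p k : ℝ) * ((1 + δ) / δ) := by
  induction k with
  | zero =>
    rw [Finset.sum_range_one]
    have h : (1:ℝ) ≤ (1+δ)/δ := by rw [le_div_iff₀ hδ]; linarith
    nlinarith [(Nat.cast_nonneg (p 0) : (0:ℝ) ≤ (p 0:ℝ))]
  | succ k ih =>
    rw [Finset.sum_range_succ]
    have h1 := hlac k
    have h2 : (p k : ℝ) * (1+δ) ≤ (p (k+1) : ℝ) := by linarith [h1, mul_comm (1+δ) ((p k : ℝ))]
    have key : (p k:ℝ) * ((1+δ)/δ) + p (k+1) ≤ (p (k+1):ℝ) * ((1+δ)/δ) := by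
      have e1 : (p k:ℝ) * ((1+δ)/δ) + p (k+1) = ((p k:ℝ)*(1+δ) + (p (k+1):ℝ)*δ)/δ := by
        field_simp
      have e2 : (p (k+1):ℝ) * ((1+δ)/δ) = ((p (k+1):ℝ) + (p (k+1):ℝ)*δ)/δ := by
        field_simp
      rw [e1, e2]
      gcongr
    linarith

theorem sparse_power_sequence_growth
    (m : ℕ) (hm : 2 ≤ m) (δ C : ℝ) (hδ : 0 < δ)
    (p a : ℕ → ℕ) (hp : ∀ k, (p k).Prime)
    (hlac : ∀ k, (1 + δ) * (p k : ℝ) ≤ (p (k + 1) : ℝ))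
    (hup : ∀ k, (p (k + 1) : ℝ) ≤ C * (p k : ℝ))
    (hapos : ∀ k, 0 < a k)
    (hasize : ∀ k, (a k : ℝ) ≤ C * (p k : ℝ) ^ m)
    (hagap : ∀ k, a k + (p k) ^ m < a (k + 1))
    (n : ℕ → ℕ) (hmono : StrictMono n)
    (hrange : Set.range n =
      ⋃ k, (fun j : ℕ => a k + ∑ r ∈ Finset.range m, (p k) ^ r * (j ^ (r + 1) % p k)) ''
        {j : ℕ | j < p k}) :
    ∃ c C' : ℝ, 0 < c ∧ c ≤ C' ∧ ∀ ν : ℕ,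
      c * ((ν : ℝ) + 1) ^ m ≤ (n ν : ℝ) ∧ (n ν : ℝ) ≤ C' * ((ν : ℝ) + 1) ^ m := by
  classical
  have hp2 : ∀ k, 2 ≤ p k := fun k => (hp k).two_le
  set f : ℕ → ℕ → ℕ :=
    fun k j => a k + ∑ r ∈ Finset.range m, (p k) ^ r * (j ^ (r + 1) % p k) with hf
  set F : ℕ → Finset ℕ := fun k => (Finset.range (p k)).image (f k) with hF
  have hrange' : Set.range n = ⋃ k, (F k : Set ℕ) := by
    rw [hrange]
    apply Set.iUnion_congr
    intro k
    rw [hF]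
    simp only [Finset.coe_image, Finset.coe_range]
    rfl
  -- bounds for elements of F k
  have hFlb : ∀ k x, x ∈ F k → a k ≤ x := by
    intro k x hx
    obtain ⟨j, _, rfl⟩ := Finset.mem_image.1 hx
    exact Nat.le_add_right _ _
  have hFub : ∀ k x, x ∈ F k → x < a k + p k ^ m := by
    intro k x hx
    obtain ⟨j, _, rfl⟩ := Finset.mem_image.1 hx
    have hsum : (∑ r ∈ Finset.range m, (p k) ^ r * (j ^ (r + 1) % p k)) ≤
        ∑ r ∈ Finset.range m, (p k) ^ r * (p k - 1) := by
      apply Finset.sum_le_sum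
      intro r _
      have hpk := hp2 k
      exact Nat.mul_le_mul_left _ (by
        have := Nat.mod_lt (j ^ (r+1)) (show 0 < p k by omega)
        omega)
    have hg := geom_aux (p k) (hp k).one_lt.le m
    simp only [hf]
    omega
  have hamono : StrictMono a := strictMono_nat_of_lt_succ fun k => by
    have := hagap k; omega
  -- cardinality of F k
  have hcardF : ∀ k, (F k).card = p k := by
    intro k
    rw [hF]
    rw [Finset.card_image_of_injOn, Finset.card_range]
    intro j1 h1 j2 h2 heq
    simp only [Finset.coe_range, Set.mem_Iio] at h1 h2
    have hsums : (∑ r ∈ Finset.range m, (p k) ^ r * (j1 ^ (r + 1) % p k)) =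
        ∑ r ∈ Finset.range m, (p k) ^ r * (j2 ^ (r + 1) % p k) := by
      have := heq
      simp only [hf] at this
      omega
    have e1 := mod_aux (p k) m j1 (by omega) h1
    have e2 := mod_aux (p k) m j2 (by omega) h2
    rw [← e1, ← e2, hsums]
  -- ordering of blocks
  have horder : ∀ i j, i < j → ∀ x ∈ F i, ∀ y ∈ F j, x < y := by
    intro i j hij x hx y hy
    have h1 : x < a i + p i ^ m := hFub i x hx
    have h2 : a (i + 1) ≤ a j := hamono.monotone hij
    have h3 := hagap i
    have h4 := hFlb j y hy
    omega
  have hdisj : ∀ i j, i ≠ j → Disjoint (F i) (F j) := by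
    intro i j hij
    rw [Finset.disjoint_left]
    intro x hxi hxj
    rcases Nat.lt_or_ge i j with h | h
    · exact absurd (horder i j h x hxi x hxj) (lt_irrefl x)
    · exact absurd (horder j i (by omega) x hxj x hxi) (lt_irrefl x)
  set G : ℕ → Finset ℕ := fun k => (Finset.range (k + 1)).biUnion F with hG
  have hcardG : ∀ k, (G k).card = ∑ i ∈ Finset.range (k + 1), p i := by
    intro k
    rw [hG]
    rw [Finset.card_biUnion (fun i _ j _ h => hdisj i j h)]
    exact Finset.sum_congr rfl fun i _ => hcardF i
  have hGrange : ∀ k x, x ∈ G k → x ∈ Set.range n := by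
    intro k x hx
    rw [hrange']
    rcases Finset.mem_biUnion.1 hx with ⟨i, _, hxi⟩
    exact Set.mem_iUnion.2 ⟨i, hxi⟩
  -- Claim 1
  have claim1 : ∀ k ν, ν < (G k).card → n ν < a k + p k ^ m := by
    intro k ν hν
    set I : Finset ℕ := (G k).preimage n (hmono.injective.injOn) with hI
    have himg : I.image n = G k := by
      rw [hI, Finset.image_preimage]
      apply Finset.filter_true_of_mem
      intro x hx
      exact hGrange k x hx
    have hcardI : I.card = (G k).card := by
      rw [← himg, Finset.card_image_of_injective _ hmono.injective]
    have hex : ∃ i ∈ I, ν ≤ i := by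
      by_contra hc
      push_neg at hc
      have hsub : I ⊆ Finset.range ν := fun i hi => Finset.mem_range.2 (hc i hi)
      have := Finset.card_le_card hsub
      rw [Finset.card_range] at this
      omega
    obtain ⟨i, hiI, hνi⟩ := hex
    have hni : n i ∈ G k := by rw [← himg]; exact Finset.mem_image_of_mem n hiI
    have hub : n i < a k + p k ^ m := by
      rcases Finset.mem_biUnion.1 hni with ⟨l, hl, hnl⟩
      have hlk : l ≤ k := by have := Finset.mem_range.1 hl; omega
      rcases eq_or_lt_of_le hlk with rfl | hlt
      · exact hFub l _ hnl
      · have h1 := hFub l _ hnl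
        have h2 : a (l + 1) ≤ a k := hamono.monotone hlt
        have := hagap l
        omega
    exact lt_of_le_of_lt (hmono.monotone hνi) hub
  -- Claim 2
  have claim2 : ∀ k ν, n ν < a (k + 1) → ν < ∑ i ∈ Finset.range (k + 1), p i := by
    intro k ν h
    have hsub : (Finset.range (ν + 1)).image n ⊆ G k := by
      intro x hx
      obtain ⟨i, hi, rfl⟩ := Finset.mem_image.1 hx
      have hi' : i ≤ ν := by have := Finset.mem_range.1 hi; omega
      have hle : n i ≤ n ν := hmono.monotone hi'
      have hmem : n i ∈ Set.range n := ⟨i, rfl⟩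
      rw [hrange'] at hmem
      obtain ⟨l, hl⟩ := Set.mem_iUnion.1 hmem
      have hlF : n i ∈ F l := hl
      have hlk : l ≤ k := by
        by_contra hc
        push_neg at hc
        have h1 : a (k + 1) ≤ a l := hamono.monotone hc
        have h2 := hFlb l _ hlF
        omega
      exact Finset.mem_biUnion.2 ⟨l, Finset.mem_range.2 (by omega), hlF⟩
    have hcard := Finset.card_le_card hsub
    rw [Finset.card_image_of_injective _ hmono.injective, Finset.card_range, hcardG] at hcard
    omega
  have hblock : ∀ ν, ∃ k, n ν ∈ F k := by
    intro ν
    have hmem : n ν ∈ Set.range n := ⟨ν, rfl⟩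
    rw [hrange'] at hmem
    obtain ⟨k, hk⟩ := Set.mem_iUnion.1 hmem
    exact ⟨k, hk⟩
  -- real constants
  have hp0R : (1:ℝ) ≤ p 0 := by exact_mod_cast (hp 0).one_lt.le
  have hp0pos : (0:ℝ) < p 0 := by linarith
  have hC : 1 + δ ≤ C := by
    have h1 := hlac 0
    have h2 := hup 0
    nlinarith
  have hC1 : 1 < C := by linarith
  have hCpos : 0 < C := by linarith
  refine ⟨min ((δ / ((1 + δ) * C)) ^ m) (1 / (p 0 : ℝ) ^ m), (C + 1) * (C * p 0) ^ m,
    ?_, ?_, ?_⟩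
  · apply lt_min
    · positivity
    · positivity
  · have h1 : δ / ((1 + δ) * C) ≤ 1 := by
      rw [div_le_one (by positivity)]
      nlinarith
    have h2 : (δ / ((1 + δ) * C)) ^ m ≤ 1 := pow_le_one₀ (by positivity) h1
    have h3 : (1:ℝ) ≤ (C + 1) * (C * p 0) ^ m := by
      have hcp : (1:ℝ) ≤ C * p 0 := by nlinarith
      have := one_le_pow₀ hcp (n := m)
      nlinarith
    exact le_trans (min_le_left _ _) (h2.trans h3)
  intro ν
  obtain ⟨k, hk⟩ := hblock ν
  have hnlb : a k ≤ n ν := hFlb k _ hk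
  have hnub : n ν < a k + p k ^ m := hFub k _ hk
  have hν1 : ν + 1 ≤ ∑ i ∈ Finset.range (k + 1), p i := by
    have h1 : n ν < a (k + 1) := by have := hagap k; omega
    have := claim2 k ν h1
    omega
  constructor
  · -- lower bound
    have hrealsum : (ν : ℝ) + 1 ≤ (p k : ℝ) * ((1 + δ) / δ) := by
      have hg := geom_real δ hδ p hlac k
      have hcast : ((ν : ℝ) + 1) ≤ ∑ i ∈ Finset.range (k + 1), (p i : ℝ) := by
        have : ((ν + 1 : ℕ) : ℝ) ≤ ((∑ i ∈ Finset.range (k + 1), p i : ℕ) : ℝ) := by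
          exact_mod_cast hν1
        push_cast at this
        linarith
      linarith
    have hpk_lb : ((ν : ℝ) + 1) * (δ / (1 + δ)) ≤ (p k : ℝ) := by
      have h := mul_le_mul_of_nonneg_right hrealsum
        (show (0:ℝ) ≤ δ / (1 + δ) by positivity)
      have he : (p k : ℝ) * ((1 + δ) / δ) * (δ / (1 + δ)) = (p k : ℝ) := by
        field_simp
      linarith [he ▸ h]
    match k, hk, hnlb, hnub, hν1, hrealsum, hpk_lb with
    | 0, hk, hnlb, hnub, hν1, hrealsum, hpk_lb =>
      -- k = 0 : ν + 1 ≤ p 0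
      have hνp : ν + 1 ≤ p 0 := by
        rw [Finset.sum_range_one] at hν1; exact hν1
      have h1 : ((ν : ℝ) + 1) ^ m ≤ (p 0 : ℝ) ^ m := by
        apply pow_le_pow_left₀ (by positivity)
        exact_mod_cast hνp
      have h2 : (1:ℝ) ≤ (n ν : ℝ) := by
        have : 1 ≤ n ν := le_trans (hapos 0) hnlb
        exact_mod_cast this
      have h3 : min ((δ / ((1 + δ) * C)) ^ m) (1 / (p 0 : ℝ) ^ m) * ((ν : ℝ) + 1) ^ m ≤
          (1 / (p 0 : ℝ) ^ m) * (p 0 : ℝ) ^ m := by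
        apply mul_le_mul (min_le_right _ _) h1 (by positivity) (by positivity)
      have h4 : (1 / (p 0 : ℝ) ^ m) * (p 0 : ℝ) ^ m = 1 := by
        field_simp
      linarith
    | (k' + 1), hk, hnlb, hnub, hν1, hrealsum, hpk_lb =>
      have hnm : ((p k' : ℝ)) ^ m ≤ (n ν : ℝ) := by
        have h1 : p k' ^ m ≤ n ν := by
          have := hagap k'
          omega
        exact_mod_cast h1
      have hpk' : ((ν : ℝ) + 1) * (δ / ((1 + δ) * C)) ≤ (p k' : ℝ) := by
        have h1 := hup k'
        have h2 : (p (k' + 1) : ℝ) / C ≤ (p k' : ℝ) := by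
          rw [div_le_iff₀ hCpos]
          linarith [mul_comm (p k' : ℝ) C]
        have h3 : ((ν : ℝ) + 1) * (δ / (1 + δ)) / C ≤ (p (k' + 1) : ℝ) / C := by
          gcongr
        have he : ((ν : ℝ) + 1) * (δ / (1 + δ)) / C = ((ν : ℝ) + 1) * (δ / ((1 + δ) * C)) := by
          field_simp
        linarith [he ▸ h3]
      have h4 : (((ν : ℝ) + 1) * (δ / ((1 + δ) * C))) ^ m ≤ (p k' : ℝ) ^ m := by
        apply pow_le_pow_left₀ (by positivity) hpk'
      rw [mul_pow] at h4
      have h5 : min ((δ / ((1 + δ) * C)) ^ m) (1 / (p 0 : ℝ) ^ m) * ((ν : ℝ) + 1) ^ m ≤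
          ((ν : ℝ) + 1) ^ m * (δ / ((1 + δ) * C)) ^ m := by
        rw [mul_comm (((ν : ℝ) + 1) ^ m)]
        apply mul_le_mul_of_nonneg_right (min_le_left _ _) (by positivity)
      linarith
  · -- upper bound
    have hub1 : (n ν : ℝ) ≤ (C + 1) * (p k : ℝ) ^ m := by
      have h1 : (n ν : ℝ) ≤ (a k : ℝ) + (p k : ℝ) ^ m := by
        have : ((n ν : ℕ) : ℝ) < ((a k + p k ^ m : ℕ) : ℝ) := by exact_mod_cast hnub
        push_cast at this
        linarith
      have h2 := hasize k
      nlinarith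
    have hkey : (p k : ℝ) ≤ C * (p 0 : ℝ) * ((ν : ℝ) + 1) := by
      have hν0 : (1:ℝ) ≤ (ν : ℝ) + 1 := by
        have : (0:ℝ) ≤ (ν : ℝ) := Nat.cast_nonneg ν
        linarith
      match k, hk, hnlb, hnub, hν1 with
      | 0, _, _, _, _ =>
        have hA : (p 0 : ℝ) ≤ C * (p 0 : ℝ) :=
          le_mul_of_one_le_left hp0pos.le hC1.le
        have hB : C * (p 0 : ℝ) ≤ C * (p 0 : ℝ) * ((ν : ℝ) + 1) :=
          le_mul_of_one_le_right (mul_pos hCpos hp0pos).le hν0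
        linarith
      | (k' + 1), hk, hnlb, hnub, hν1 =>
        have hcard : (G k').card ≤ ν := by
          by_contra hc
          push_neg at hc
          have h1 := claim1 k' ν hc
          have h2 := hagap k'
          omega
        have hpν : p k' ≤ ν := by
          rw [hcardG] at hcard
          have := Finset.single_le_sum (f := p) (fun i _ => Nat.zero_le _)
            (Finset.self_mem_range_succ k')
          omega
        have hpνR : (p k' : ℝ) ≤ (ν : ℝ) := by exact_mod_cast hpν
        have h1 := hup k'
        have hA : C * (p k' : ℝ) ≤ C * (ν : ℝ) :=
          mul_le_mul_of_nonneg_left hpνR hCpos.le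
        have hB : C * (ν : ℝ) ≤ C * ((ν : ℝ) + 1) :=
          mul_le_mul_of_nonneg_left (by linarith) hCpos.le
        have hD : C * ((ν : ℝ) + 1) ≤ C * (p 0 : ℝ) * ((ν : ℝ) + 1) :=
          mul_le_mul_of_nonneg_right (le_mul_of_one_le_right hCpos.le hp0R)
            (by linarith)
        linarith
    have h4 : (p k : ℝ) ^ m ≤ (C * (p 0 : ℝ) * ((ν : ℝ) + 1)) ^ m := by
      apply pow_le_pow_left₀ (by positivity) hkey
    rw [mul_pow] at h4
    have h5 : (0:ℝ) ≤ C + 1 := by linarith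
    calc (n ν : ℝ) ≤ (C + 1) * (p k : ℝ) ^ m := hub1
      _ ≤ (C + 1) * ((C * (p 0 : ℝ)) ^ m * ((ν : ℝ) + 1) ^ m) := by
          apply mul_le_mul_of_nonneg_left h4 h5
      _ = (C + 1) * (C * (p 0 : ℝ)) ^ m * ((ν : ℝ) + 1) ^ m := by ring
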